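/- arXiv:1802.08699 — 2 statements merged into one kernel-verified Lean document; each statement's English description precedes it below -/
import Mathlib

section
/- For all integers $N \geq 4$ and $m \geq 3$, one has $\binom{m(m+N-1)+1}{N} > \binom{m+N-1}{N}(m+1)^N$. -/
lemma cube_aux (m : ℤ) (hm : 3 ≤ m) : (0:ℤ) ≤ m*m*m - 3*m*m :=
  by nlinarith [mul_nonneg (by linarith : (0:ℤ) ≤ m-3) (mul_nonneg (by linarith : (0:ℤ) ≤ m) (by linarith : (0:ℤ) ≤ m))]

lemma pairZ (m a b : ℤ) (hm : 3 ≤ m) (hab : 3 ≤ a + b)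
    (h : 4 ≤ m ∨ 4 ≤ a + b) :
    (m+a)*(m+1)*((m+b)*(m+1)) ≤ (m*m+m*a+(m-1)*b+1)*(m*m+m*b+(m-1)*a+1) := by
  have hc := cube_aux m hm
  rcases h with h | h
  · have hc4 : (0:ℤ) ≤ m*m*m - 4*m*m :=
      by nlinarith [mul_nonneg (by linarith : (0:ℤ) ≤ m-4) (mul_nonneg (by linarith : (0:ℤ) ≤ m) (by linarith : (0:ℤ) ≤ m))]
    nlinarith [mul_nonneg (by nlinarith : (0:ℤ) ≤ m^2+2*m) (sq_nonneg (a-b)),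
      mul_nonneg (by nlinarith : (0:ℤ) ≤ 3*m^2-6*m) (sq_nonneg (a+b-3)),
      mul_nonneg (by nlinarith : (0:ℤ) ≤ 4*m^3+6*m^2-32*m-4) (by linarith : (0:ℤ) ≤ a+b-3),
      (by nlinarith : (0:ℤ) ≤ 4*m^3-5*m^2-42*m-8)]
  · nlinarith [mul_nonneg (by nlinarith : (0:ℤ) ≤ m^2+2*m) (sq_nonneg (a-b)),
      mul_nonneg (by nlinarith : (0:ℤ) ≤ 3*m^2-6*m) (sq_nonneg (a+b-4)),
      mul_nonneg (by nlinarith : (0:ℤ) ≤ 4*m^3+12*m^2-44*m-4) (by linarith : (0:ℤ) ≤ a+b-4),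
      (by nlinarith : (0:ℤ) ≤ 8*m^3+4*m^2-80*m-12)]

lemma pairZs (m b : ℤ) (hm : 3 ≤ m) (hb : 3 ≤ b) :
    m*(m+1)*((m+b)*(m+1)) < (m*m+(m-1)*b+1)*(m*m+m*b+1) := by
  have hc := cube_aux m hm
  nlinarith [mul_nonneg (mul_nonneg (by nlinarith : (0:ℤ) ≤ m^2-m) (by linarith : (0:ℤ) ≤ b)) (by linarith : (0:ℤ) ≤ b-3),
    mul_nonneg (by linarith : (0:ℤ) ≤ b-3) (by nlinarith : (0:ℤ) ≤ m^3-2*m-1),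
    (by nlinarith : (0:ℤ) < m^3+m^2-6*m-2)]

open Finset in
theorem stmt_1 (N m : ℕ) (hN : 4 ≤ N) (hm : 3 ≤ m) :
    Nat.choose (m * (m + N - 1) + 1) N > Nat.choose (m + N - 1) N * (m + 1) ^ N := by
  by_cases hex : N = 4 ∧ m = 3
  · obtain ⟨rfl, rfl⟩ := hex; decide
  set K := m + N - 1 with hK
  have hKm : K ≤ m * K := Nat.le_mul_of_pos_left K (by omega)
  have main : K.descFactorial N * (m+1)^N < (m*K+1).descFactorial N := by
    have h2 : (K.descFactorial N * (m+1)^N)^2 < ((m*K+1).descFactorial N)^2 := by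
      have eL : ((m*K+1).descFactorial N)^2
          = ∏ i ∈ range N, ((m*K+1-(N-1-i)) * (m*K+1-i)) := by
        rw [Nat.descFactorial_eq_prod_range, sq, prod_mul_distrib,
          prod_range_reflect (fun i => m*K+1-i) N]
      have eR : (K.descFactorial N * (m+1)^N)^2
          = ∏ i ∈ range N, ((K-(N-1-i))*(m+1) * ((K-i)*(m+1))) := by
        simp only [prod_mul_distrib, prod_const, card_range, Nat.descFactorial_eq_prod_range,
          prod_range_reflect (fun i => K - i) N]
        ring
      rw [eL, eR]
      refine Finset.prod_lt_prod ?_ ?_ ?_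
      · intro i hi
        rw [mem_range] at hi
        have h1 : 0 < K - (N-1-i) := by omega
        have h2 : 0 < K - i := by omega
        exact Nat.mul_pos (Nat.mul_pos h1 (by omega)) (Nat.mul_pos h2 (by omega))
      · intro i hi
        rw [mem_range] at hi
        set b := N - 1 - i with hb
        have hib : i + b = N - 1 := by omega
        have hKZ : K = m + i + b := by omega
        have l1 : b ≤ K := by omega
        have l2 : i ≤ K := by omega
        have l3 : b ≤ m * K + 1 := by omega
        have l4 : i ≤ m * K + 1 := by omega
        have hp := pairZ (m:ℤ) i b (by exact_mod_cast hm)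
          (by push_cast; omega)
          (by rcases (show 4 ≤ m ∨ 4 ≤ i + b by omega) with h | h
              · exact Or.inl (by exact_mod_cast h)
              · exact Or.inr (by exact_mod_cast h))
        zify [l1, l2, l3, l4]
        have hKc : (K:ℤ) = (m:ℤ) + i + b := by exact_mod_cast hKZ
        rw [hKc]
        nlinarith [hp]
      · refine ⟨0, mem_range.mpr (by omega), ?_⟩
        simp only [Nat.sub_zero]
        set b := N - 1 with hb
        have hb3 : 3 ≤ b := by omega
        have hKZ : K = m + b := by omega
        have l1 : b ≤ K := by omega
        have l3 : b ≤ m * K + 1 := by omega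
        have hp := pairZs (m:ℤ) b (by exact_mod_cast hm) (by exact_mod_cast hb3)
        zify [l1, l3]
        have hKc : (K:ℤ) = (m:ℤ) + b := by exact_mod_cast hKZ
        rw [hKc]
        nlinarith [hp]
    exact lt_of_pow_lt_pow_left₀ 2 (Nat.zero_le _) h2
  have e1 : N.factorial * (K.choose N * (m+1)^N) = K.descFactorial N * (m+1)^N := by
    rw [Nat.descFactorial_eq_factorial_mul_choose]; ring
  have e2 : N.factorial * (m*K+1).choose N = (m*K+1).descFactorial N :=
    (Nat.descFactorial_eq_factorial_mul_choose _ _).symm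
  exact Nat.lt_of_mul_lt_mul_left (a := N.factorial) (by rw [e1, e2]; exact main)
end

section
/- For all integers $m \geq 3$ and $m \geq 3$, the inequality $\binom{m(m+3)+1}{4} > \binom{m+3}{4}(m+1)^4$ holds. -/
theorem stmt_3 (m : ℕ) (hm : 3 ≤ m) :
    Nat.choose (m * (m + 3) + 1) 4 > Nat.choose (m + 3) 4 * (m + 1) ^ 4 := by
  obtain ⟨a, rfl⟩ := Nat.exists_eq_add_of_le hm
  have key : ∀ n : ℕ, Nat.choose n 4 * 24 = n.descFactorial 4 := by
    intro n
    rw [Nat.descFactorial_eq_factorial_mul_choose]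
    norm_num [Nat.factorial]
    ring
  have h1 := key ((3 + a) * (3 + a + 3) + 1)
  have h2 := key (3 + a + 3)
  have goal24 : Nat.choose ((3 + a) * (3 + a + 3) + 1) 4 * 24 >
      Nat.choose (3 + a + 3) 4 * (3 + a + 1) ^ 4 * 24 := by
    rw [h1]
    calc Nat.choose (3 + a + 3) 4 * (3 + a + 1) ^ 4 * 24
        = Nat.descFactorial (3 + a + 3) 4 * (3 + a + 1) ^ 4 := by rw [← h2]; ring
      _ < Nat.descFactorial ((3 + a) * (3 + a + 3) + 1) 4 := by
          simp [Nat.descFactorial]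
          have e1 : (3 + a) * (3 + a + 3) = a^2 + 9*a + 18 := by ring
          rw [e1]
          have h3 : a^2 + 9*a + 18 - 1 = a^2 + 9*a + 17 := by omega
          have h4 : a^2 + 9*a + 18 - 2 = a^2 + 9*a + 16 := by omega
          rw [h3, h4]
          have key2 : (a^2+9*a+16) * ((a^2+9*a+17) * ((a^2+9*a+18) * (a^2+9*a+18+1)))
              = (3 + a) * ((3 + a + 1) * ((3 + a + 2) * (3 + a + 3))) * (3 + a + 1) ^ 4
                + (864 + 12438*a + 17409*a^2 + 10396*a^3 + 3286*a^4 + 576*a^5 + 53*a^6 + 2*a^7) := by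
            ring
          omega
  omega
end
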